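/- Let T be a streamlined κ-tree and suppose ⟨b^α : α ∈ R⟩ are nodes with b^α ∈ T_α, such that R ⊆ κ is cofinal, otp((b^α)⁻¹(0)) = ω for all α ∈ R, (b^α)⁻¹(0) is club in α, and for each α ∈ R the only extension of b^α in T_{α+1} is b^α⌢⟨0⟩. Then {b^α : α ∈ R} is an antichain of T of size κ; in particular T is not κ-Souslin. -/

import Mathlib

noncomputable section
open Cardinal Set

/-- A node of a streamlined tree: a partial function from ordinals to `ℕ`,
encoded as an `Option ℕ`-valued function; its domain is meant to be an ordinal. -/
abbrev ONode : Type 1 := Ordinal → Option ℕ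

/-- `t` has domain exactly the ordinal `α`. -/
def nodeDom (t : ONode) (α : Ordinal) : Prop := ∀ γ, (t γ).isSome ↔ γ < α

/-- The restriction `t ↾ β`. -/
def nrestrict (t : ONode) (β : Ordinal) : ONode := fun γ => if γ < β then t γ else none

/-- `nExt t s` says that `s` extends `t`, i.e. `t ⊆ s` as functions. -/
def nExt (t s : ONode) : Prop := ∀ γ, (t γ).isSome → s γ = t γ

/-- Incompatibility of two nodes in the tree order `⊆`. -/
def nIncomp (s t : ONode) : Prop := ¬ nExt s t ∧ ¬ nExt t s

/-- The `α`-th level of `T`. -/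
def levelSet (T : Set ONode) (α : Ordinal) : Set ONode := {t ∈ T | nodeDom t α}

/-- `T ⊆ {}^{<κ}ω` is a streamlined `κ`-tree. -/
structure IsStreamTree (κ : Cardinal.{0}) (T : Set ONode) : Prop where
  hdom : ∀ t ∈ T, ∃ α < κ.ord, nodeDom t α
  down : ∀ t ∈ T, ∀ β, nrestrict t β ∈ T
  level_ne : ∀ α < κ.ord, (levelSet T α).Nonempty
  level_small : ∀ α < κ.ord, Cardinal.mk ↥(levelSet T α) < Cardinal.lift.{1} κ

/-- The lexicographic (strict) order on nodes: `s <_lex t` iff `s ⊊ t`, or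
`s(Δ) < t(Δ)` at the least point `Δ` of disagreement. -/
def lexLT (s t : ONode) : Prop :=
  (nExt s t ∧ s ≠ t) ∨
  ∃ Δ m n, (∀ γ < Δ, s γ = t γ) ∧ s Δ = some m ∧ t Δ = some n ∧ m < n

/-- `T` has a chain (branch) of size `κ`. -/
def HasKappaBranch (κ : Cardinal.{0}) (T : Set ONode) : Prop :=
  ∃ B ⊆ T, (∀ s ∈ B, ∀ t ∈ B, nExt s t ∨ nExt t s) ∧
    Cardinal.lift.{1} κ ≤ Cardinal.mk ↥B

/-- A `ϱ`-modification: a finitely supported integer correction term, whose support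
is a finite set of non-limit ordinals below `κ` containing `0`. -/
structure RhoMod (κ : Cardinal.{0}) where
  x : Finset Ordinal
  zero_mem : (0 : Ordinal) ∈ x
  mem_nacc : ∀ β ∈ x, β < κ.ord ∧ ¬ Order.IsSuccLimit β
  f : Ordinal → ℤ

/-- `max (dom η ∩ (β+1))`: the largest point of the support of `η` that is `≤ β`. -/
def RhoMod.anchor {κ : Cardinal.{0}} (η : RhoMod κ) (β : Ordinal) : Ordinal :=
  (η.x.filter (· ≤ β)).max' ⟨0, Finset.mem_filter.2 ⟨η.zero_mem, zero_le⟩⟩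

/-- `η * τ` is everywhere defined (takes values in `ω`). -/
def rhoDefined {κ : Cardinal.{0}} (η : RhoMod κ) (t : ONode) : Prop :=
  ∀ γ n, t γ = some n → 0 ≤ η.f (η.anchor γ) + (n : ℤ)

/-- The action `η * t` of a `ϱ`-modification on a node. -/
def rhoAct {κ : Cardinal.{0}} (η : RhoMod κ) (t : ONode) : ONode :=
  fun γ => (t γ).map fun n => (η.f (η.anchor γ) + (n : ℤ)).toNat

/-- `T` is `ϱ`-uniform: closed under all (defined) `ϱ`-modifications. -/
def RhoUniform (κ : Cardinal.{0}) (T : Set ONode) : Prop :=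
  ∀ t ∈ T, ∀ η : RhoMod κ, rhoDefined η t → rhoAct η t ∈ T

/-- `T` is `ϱ`-coherent: any two nodes on a common level are `ϱ`-modifications of each other. -/
def RhoCoherent (κ : Cardinal.{0}) (T : Set ONode) : Prop :=
  ∀ α < κ.ord, ∀ s ∈ levelSet T α, ∀ t ∈ levelSet T α,
    ∃ η : RhoMod κ, rhoDefined η t ∧ rhoAct η t = s

/-- The cone `T_{[s]}`. -/
def cone (T : Set ONode) (s : ONode) : Set ONode := {t ∈ T | nExt t s ∨ nExt s t}

/-- The frozen cone `T_{[s,i]}`. -/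
def frozenCone (T : Set ONode) (s : ONode) (i : ℕ) : Set ONode :=
  {t ∈ T | nExt t s ∨ (nExt s t ∧ ∀ ξ n, ¬ (s ξ).isSome → t ξ = some n → i ≤ n)}

/-- `acc(C)`: the accumulation points of `C` belonging to `C`. -/
def accOf (C : Set Ordinal) : Set Ordinal := {β ∈ C | 0 < β ∧ sSup (C ∩ Set.Iio β) = β}

/-- `nacc(C) = C \ acc(C)`. -/
def naccOf (C : Set Ordinal) : Set Ordinal := C \ accOf C

/-- `C` is a club (closed unbounded) subset of `α`. -/
def ClubIn (C : Set Ordinal) (α : Ordinal) : Prop :=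
  C ⊆ Set.Iio α ∧ (∀ β < α, ∃ γ ∈ C, β ≤ γ) ∧
    ∀ β < α, 0 < β → sSup (C ∩ Set.Iio β) = β → β ∈ C

/-- `S` is stationary in `α`. -/
def StatIn (S : Set Ordinal) (α : Ordinal) : Prop :=
  ∀ D, ClubIn D α → (S ∩ D).Nonempty

/-- If `⟨b^α : α ∈ R⟩` picks, cofinally in `κ`, nodes whose zero-set is a club of order type
`ω` and whose unique successor appends `0`, then `{b^α : α ∈ R}` is an antichain of size `κ`;
in particular `T` is not `κ`-Souslin. -/
theorem stmt13 (κ : Cardinal.{0}) (hreg : κ.IsRegular) (hunc : Cardinal.aleph0 < κ)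
    (T : Set ONode) (hT : IsStreamTree κ T)
    (R : Set Ordinal) (hRsub : R ⊆ Set.Iio κ.ord) (hRcof : ∀ β < κ.ord, ∃ α ∈ R, β ≤ α)
    (b : Ordinal → ONode)
    (hbT : ∀ α ∈ R, b α ∈ T ∧ nodeDom (b α) α)
    (hotp : ∀ α ∈ R, ∃ f : ℕ → Ordinal, StrictMono f ∧ Set.range f = {γ | b α γ = some 0})
    (hclub : ∀ α ∈ R, ClubIn {γ | b α γ = some 0} α)
    (hext : ∀ α ∈ R, ∀ t ∈ T, nodeDom t (α + 1) → nExt (b α) t →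
      t = fun γ => if γ = α then some 0 else b α γ) :
    (∀ α ∈ R, ∀ β ∈ R, α ≠ β → nIncomp (b α) (b β)) ∧
    Cardinal.mk ↥(b '' R) = Cardinal.lift.{1} κ := by
  -- Key claim: for α < β in R, b β does not extend b α.
  have key : ∀ α ∈ R, ∀ β ∈ R, α < β → ¬ nExt (b α) (b β) := by
    intro α hα β hβ hαβ h
    obtain ⟨hbαT, hbαdom⟩ := hbT α hα
    obtain ⟨hbβT, hbβdom⟩ := hbT β hβ
    -- restriction of b β to α+1 is the unique extension, so (b β) α = some 0
    have hbβα : b β α = some 0 := by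
      set t : ONode := nrestrict (b β) (α + 1) with ht
      have htT : t ∈ T := hT.down _ hbβT _
      have hαs : α < α + 1 := by
        rw [Ordinal.add_one_eq_succ]; exact Order.lt_succ α
      have htdom : nodeDom t (α + 1) := by
        intro γ
        by_cases hγ : γ < α + 1
        · have hgβ : γ < β := lt_of_lt_of_le hγ (Order.add_one_le_of_lt hαβ)
          simp only [ht, nrestrict, if_pos hγ]
          exact iff_of_true ((hbβdom γ).mpr hgβ) hγ
        · simp only [ht, nrestrict, if_neg hγ, Option.isSome_none,
            Bool.false_eq_true, false_iff]
          exact hγ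
      have htext : nExt (b α) t := by
        intro γ hγ
        have hγα : γ < α := (hbαdom γ).mp hγ
        have hγs : γ < α + 1 := hγα.trans hαs
        simp only [ht, nrestrict, if_pos hγs]
        exact h γ hγ
      have := hext α hα t htT htdom htext
      have h0 : t α = some 0 := by rw [this]; simp
      rw [ht] at h0
      simpa only [nrestrict, if_pos hαs] using h0
    -- zero sets
    obtain ⟨f, hf, hfr⟩ := hotp α hα
    obtain ⟨g, hg, hgr⟩ := hotp β hβ
    have hflt : ∀ n, f n < α := by
      intro n
      have : f n ∈ {γ | b α γ = some 0} := hfr ▸ Set.mem_range_self n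
      exact (hclub α hα).1 this
    have hfsub : ∀ n, ∃ m, g m = f n := by
      intro n
      have h1 : b α (f n) = some 0 := by
        have : f n ∈ {γ | b α γ = some 0} := hfr ▸ Set.mem_range_self n
        exact this
      have h2 : b β (f n) = some 0 := by rw [h (f n) (by simp [h1]), h1]
      have : f n ∈ Set.range g := by rw [hgr]; exact h2
      exact this
    obtain ⟨k, hk⟩ : ∃ k, g k = α := by
      have : α ∈ Set.range g := by rw [hgr]; exact hbβα
      exact this
    choose m hm using hfsub
    have hmk : ∀ n, m n < k := by
      intro n
      have : g (m n) < g k := by rw [hm, hk]; exact hflt n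
      exact hg.lt_iff_lt.mp this
    have hminj : Function.Injective m := by
      intro a c hac
      have : f a = f c := by rw [← hm, ← hm, hac]
      exact hf.injective this
    have hcard : ((Finset.range (k + 1)).image m).card ≤ (Finset.range k).card := by
      apply Finset.card_le_card
      intro x hx
      simp only [Finset.mem_image, Finset.mem_range] at hx ⊢
      obtain ⟨n, _, rfl⟩ := hx
      exact hmk n
    rw [Finset.card_image_of_injective _ hminj, Finset.card_range, Finset.card_range] at hcard
    omega
  -- the easy direction: a node of smaller domain cannot extend one of larger domain
  have easy : ∀ α ∈ R, ∀ β ∈ R, α < β → ¬ nExt (b β) (b α) := by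
    intro α hα β hβ hαβ h
    obtain ⟨_, hbαdom⟩ := hbT α hα
    obtain ⟨_, hbβdom⟩ := hbT β hβ
    have h1 : (b β α).isSome := (hbβdom α).mpr hαβ
    have h2 : b α α = b β α := h α h1
    have : (b α α).isSome := by rw [h2]; exact h1
    exact absurd ((hbαdom α).mp this) (lt_irrefl α)
  have anti : ∀ α ∈ R, ∀ β ∈ R, α ≠ β → nIncomp (b α) (b β) := by
    intro α hα β hβ hne
    rcases hne.lt_or_gt with hlt | hlt
    · exact ⟨key α hα β hβ hlt, easy α hα β hβ hlt⟩
    · exact ⟨easy β hβ α hα hlt, key β hβ α hα hlt⟩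
  refine ⟨anti, ?_⟩
  -- injectivity of b on R
  have hinj : Set.InjOn b R := by
    intro α hα β hβ hab
    by_contra hne
    have := (anti α hα β hβ hne).1
    exact this (by rw [hab]; intro γ _; rfl)
  rw [Cardinal.mk_image_eq_of_injOn b R hinj]
  -- upper bound
  have hle : Cardinal.mk ↥R ≤ Cardinal.lift.{1} κ := by
    have h1 : Cardinal.mk ↥R ≤ Cardinal.mk ↥(Set.Iio κ.ord) := Cardinal.mk_le_mk_of_subset hRsub
    rwa [Ordinal.mk_Iio_ordinal, Cardinal.card_ord] at h1
  -- lower bound via cofinality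
  have hge : Cardinal.lift.{1} κ ≤ Cardinal.mk ↥R := by
    by_contra hlt
    push_neg at hlt
    set c : Ordinal.{1} := Ordinal.lift.{1} κ.ord with hc
    have hcof : c.cof = Cardinal.lift.{1} κ := by
      rw [hc, ← Ordinal.lift_cof, hreg.cof_eq]
    have hιlt : Cardinal.mk ↥R < c.cof := by rwa [hcof]
    have hsup : (⨆ a : ↥R, Ordinal.lift.{1} a.1) < c :=
      Ordinal.iSup_lt_ord hιlt (fun a => by
        rw [hc]
        exact Ordinal.lift_lt.mpr (hRsub a.2))
    -- but the sup is ≥ c since R is cofinal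
    have hlim : Order.IsSuccLimit κ.ord := Cardinal.isSuccLimit_ord hreg.aleph0_le
    have : c ≤ (⨆ a : ↥R, Ordinal.lift.{1} a.1) := by
      by_contra hcon
      push_neg at hcon
      obtain ⟨β, hβκ, hβeq⟩ := Ordinal.lt_lift_iff.mp (hc ▸ hcon)
      obtain ⟨α, hαR, hβα⟩ := hRcof (β + 1) (hlim.succ_lt hβκ)
      have h1 : Ordinal.lift.{1} β < Ordinal.lift.{1} α :=
        Ordinal.lift_lt.mpr (lt_of_lt_of_le (lt_add_one β) hβα)
      have h2 : Ordinal.lift.{1} α ≤ (⨆ a : ↥R, Ordinal.lift.{1} a.1) :=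
        Ordinal.le_iSup (fun a : ↥R => Ordinal.lift.{1} a.1) ⟨α, hαR⟩
      rw [hβeq] at h1
      exact absurd (lt_of_lt_of_le h1 h2) (lt_irrefl _)
    exact absurd (lt_of_le_of_lt this hsup) (lt_irrefl c)
  exact le_antisymm hle hge
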